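/- Let X be a compact Hausdorff space, X₀ and X₁ two disjoint closed subsets of X with nonempty interiors, and S ⊆ X a set such that every continuum C ⊆ X meeting both X₀ and X₁ meets S. Then there exist nonempty open sets U_k, V_k with closure(V_k) ⊆ U_k ⊆ X_k for k = 0, 1, such that every continuum C meeting both closure(V₀) and closure(V₁) meets S \ (U₀ ∪ U₁). -/

import Mathlib

open Set

/-- In a compact Hausdorff space, a connected component contained in an open set is contained
in a clopen set inside that open set. -/
lemma exists_clopen_subset_of_connectedComponent_subset
    {Y : Type*} [TopologicalSpace Y] [CompactSpace Y] [T2Space Y]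
    {x : Y} {W : Set Y} (hW : IsOpen W) (h : connectedComponent x ⊆ W) :
    ∃ Z : Set Y, IsClopen Z ∧ x ∈ Z ∧ Z ⊆ W := by
  have hempty : (Wᶜ ∩ ⋂ s : { s : Set Y // IsClopen s ∧ x ∈ s }, (s : Set Y)) = ∅ := by
    rw [← connectedComponent_eq_iInter_isClopen, ← disjoint_iff_inter_eq_empty,
      disjoint_compl_left_iff_subset]
    exact h
  obtain ⟨si, hsi⟩ := hW.isClosed_compl.isCompact.elim_finite_subfamily_closed
    (fun s : { s : Set Y // IsClopen s ∧ x ∈ s } => (s : Set Y)) (fun s => s.2.1.1) hempty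
  refine ⟨⋂ U ∈ si, (U : Set Y), isClopen_biInter_finset fun s _ => s.2.1,
    mem_iInter₂.2 fun s _ => s.2.2, ?_⟩
  rw [← disjoint_compl_left_iff_subset, disjoint_iff_inter_eq_empty]
  exact hsi

/-- The connected component in a compact set is compact. -/
lemma isCompact_connectedComponentIn {X : Type*} [TopologicalSpace X]
    {F : Set X} (hF : IsCompact F) {p : X} (hp : p ∈ F) :
    IsCompact (connectedComponentIn F p) := by
  rw [connectedComponentIn_eq_image hp]
  haveI : CompactSpace F := isCompact_iff_compactSpace.mp hF
  exact isClosed_connectedComponent.isCompact.image continuous_subtype_val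

/-- Boundary bumping: in a continuum `C`, the component of a point `p ∉ U` in `C \ U`
meets `closure U`, provided `C` meets `U`. -/
lemma bumping {X : Type*} [TopologicalSpace X] [T2Space X]
    {C U : Set X} (hC : IsCompact C) (hconn : IsConnected C) (hU : IsOpen U)
    (hCU : (C ∩ U).Nonempty) {p : X} (hp : p ∈ C \ U) :
    (connectedComponentIn (C \ U) p ∩ closure U).Nonempty := by
  by_contra hcon
  rw [not_nonempty_iff_eq_empty, ← disjoint_iff_inter_eq_empty] at hcon
  have hF : IsCompact (C \ U) := hC.diff hU
  haveI : CompactSpace (C \ U : Set X) := isCompact_iff_compactSpace.mp hF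
  set p' : (C \ U : Set X) := ⟨p, hp⟩ with hp'
  have himg : connectedComponentIn (C \ U) p = Subtype.val '' connectedComponent p' :=
    connectedComponentIn_eq_image hp
  have hsub : connectedComponent p' ⊆ Subtype.val ⁻¹' (closure U)ᶜ := by
    intro z hz
    have : (z : X) ∈ connectedComponentIn (C \ U) p := by
      rw [himg]; exact ⟨z, hz, rfl⟩
    exact fun hzc => (hcon.le_bot ⟨this, hzc⟩)
  obtain ⟨Z, hZclopen, hpZ, hZsub⟩ := exists_clopen_subset_of_connectedComponent_subset
    (isClosed_closure.isOpen_compl.preimage continuous_subtype_val) hsub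
  -- `A` is the image of `Z` in `X`
  set A : Set X := Subtype.val '' Z with hA
  have hAcl : IsClosed A := (hZclopen.1.isCompact.image continuous_subtype_val).isClosed
  have hAclU : A ∩ closure U = ∅ := by
    rw [← disjoint_iff_inter_eq_empty]
    rintro T hT1 hT2 t ht
    obtain ⟨z, hz, rfl⟩ := hT1 ht
    exact hZsub hz (hT2 ht)
  obtain ⟨O, hOopen, hOeq⟩ := isOpen_induced_iff.mp hZclopen.2
  have hAeq : A = C ∩ (O ∩ (closure U)ᶜ) := by
    apply Subset.antisymm
    · rintro a ⟨z, hz, rfl⟩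
      refine ⟨z.2.1, ?_, ?_⟩
      · have : z ∈ (Subtype.val ⁻¹' O : Set (C \ U : Set X)) := by rw [hOeq]; exact hz
        exact this
      · exact hZsub hz
    · rintro x ⟨hxC, hxO, hxU⟩
      have hxF : x ∈ C \ U := ⟨hxC, fun h => hxU (subset_closure h)⟩
      refine ⟨⟨x, hxF⟩, ?_, rfl⟩
      have : (⟨x, hxF⟩ : (C \ U : Set X)) ∈ (Subtype.val ⁻¹' O : Set (C \ U : Set X)) := hxO
      rwa [hOeq] at this
  -- Now contradict connectedness of `C`
  have hpre := hconn.isPreconnected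
  rw [isPreconnected_iff_subset_of_disjoint] at hpre
  obtain ⟨q, hqC, hqU⟩ := hCU
  have hqA : q ∉ A := fun h => by
    rw [← mem_empty_iff_false q, ← hAclU]; exact ⟨h, subset_closure hqU⟩
  have hcover : C ⊆ (O ∩ (closure U)ᶜ) ∪ Aᶜ := by
    intro x hx
    by_cases hxA : x ∈ A
    · left; rw [hAeq] at hxA; exact hxA.2
    · right; exact hxA
  have hdisj : C ∩ ((O ∩ (closure U)ᶜ) ∩ Aᶜ) = ∅ := by
    rw [eq_empty_iff_forall_notMem]
    rintro x ⟨hxC, hxO, hxA⟩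
    exact hxA (by rw [hAeq]; exact ⟨hxC, hxO⟩)
  rcases hpre (O ∩ (closure U)ᶜ) Aᶜ (hOopen.inter isClosed_closure.isOpen_compl)
      hAcl.isOpen_compl hcover hdisj with hCsub | hCsub
  · exact hqA (by rw [hAeq]; exact ⟨hqC, hCsub hqC⟩)
  · have hpA : p ∈ A := ⟨p', hpZ, rfl⟩
    exact (hCsub hp.1) hpA

/-- Lemma 3.3 of the paper. -/
theorem mazur1 {X : Type*} [TopologicalSpace X] [CompactSpace X] [T2Space X]
    (X0 X1 : Set X) (S : Set X) (h0 : IsClosed X0) (h1 : IsClosed X1)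
    (hd : Disjoint X0 X1) (hi0 : (interior X0).Nonempty) (hi1 : (interior X1).Nonempty)
    (hcut : ∀ C : Set X, IsCompact C → IsConnected C → (C ∩ X0).Nonempty →
      (C ∩ X1).Nonempty → (C ∩ S).Nonempty) :
    ∃ U0 V0 U1 V1 : Set X, IsOpen U0 ∧ IsOpen V0 ∧ IsOpen U1 ∧ IsOpen V1 ∧
      V0.Nonempty ∧ V1.Nonempty ∧
      closure V0 ⊆ U0 ∧ U0 ⊆ X0 ∧ closure V1 ⊆ U1 ∧ U1 ⊆ X1 ∧
      ∀ C : Set X, IsCompact C → IsConnected C → (C ∩ closure V0).Nonempty →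
        (C ∩ closure V1).Nonempty → (C ∩ (S \ (U0 ∪ U1))).Nonempty := by
  obtain ⟨x0, hx0⟩ := hi0
  obtain ⟨x1, hx1⟩ := hi1
  obtain ⟨U0, hU0o, hx0U0, hclU0⟩ := normal_exists_closure_subset isClosed_singleton
    isOpen_interior (singleton_subset_iff.2 hx0)
  obtain ⟨V0, hV0o, hx0V0, hclV0⟩ := normal_exists_closure_subset isClosed_singleton
    hU0o (singleton_subset_iff.2 (hx0U0 rfl))
  obtain ⟨U1, hU1o, hx1U1, hclU1⟩ := normal_exists_closure_subset isClosed_singleton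
    isOpen_interior (singleton_subset_iff.2 hx1)
  obtain ⟨V1, hV1o, hx1V1, hclV1⟩ := normal_exists_closure_subset isClosed_singleton
    hU1o (singleton_subset_iff.2 (hx1U1 rfl))
  have hU0X0 : U0 ⊆ X0 := (subset_closure.trans hclU0).trans interior_subset
  have hU1X1 : U1 ⊆ X1 := (subset_closure.trans hclU1).trans interior_subset
  have hclU0X0 : closure U0 ⊆ X0 := hclU0.trans interior_subset
  have hclU1X1 : closure U1 ⊆ X1 := hclU1.trans interior_subset
  refine ⟨U0, V0, U1, V1, hU0o, hV0o, hU1o, hV1o, ⟨x0, hx0V0 rfl⟩, ⟨x1, hx1V1 rfl⟩,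
    hclV0, hU0X0, hclV1, hU1X1, ?_⟩
  intro C hCc hCconn hCV0 hCV1
  by_contra hcon
  rw [not_nonempty_iff_eq_empty] at hcon
  have hCS : C ∩ S ⊆ U0 ∪ U1 := by
    intro x hx
    by_contra hxU
    rw [← mem_empty_iff_false x, ← hcon]
    exact ⟨hx.1, hx.2, hxU⟩
  obtain ⟨p, hpC, hpV1⟩ := hCV1
  obtain ⟨p0, hp0C, hp0V0⟩ := hCV0
  have hpX1 : p ∈ X1 := hU1X1 (hclV1 hpV1)
  have hpU0 : p ∉ U0 := fun h => hd.le_bot ⟨hU0X0 h, hpX1⟩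
  have hCU0 : (C ∩ U0).Nonempty := ⟨p0, hp0C, hclV0 hp0V0⟩
  -- Step 1: the component K of p in C \ U0
  set K := connectedComponentIn (C \ U0) p with hK
  have hpK : p ∈ K := mem_connectedComponentIn ⟨hpC, hpU0⟩
  obtain ⟨q, hqK, hqU0⟩ := bumping hCc hCconn hU0o hCU0 ⟨hpC, hpU0⟩
  have hKc : IsCompact K := isCompact_connectedComponentIn (hCc.diff hU0o) ⟨hpC, hpU0⟩
  have hKconn : IsConnected K := isConnected_connectedComponentIn_iff.mpr ⟨hpC, hpU0⟩
  have hKsub : K ⊆ C \ U0 := connectedComponentIn_subset _ _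
  have hqX0 : q ∈ X0 := hclU0X0 hqU0
  have hqU1 : q ∉ U1 := fun h => hd.le_bot ⟨hqX0, hU1X1 h⟩
  have hKU1 : (K ∩ U1).Nonempty := ⟨p, hpK, hclV1 hpV1⟩
  -- Step 2: the component L of q in K \ U1
  obtain ⟨r, hrL, hrU1⟩ := bumping hKc hKconn hU1o hKU1 ⟨hqK, hqU1⟩
  set L := connectedComponentIn (K \ U1) q with hL
  have hLc : IsCompact L := isCompact_connectedComponentIn (hKc.diff hU1o) ⟨hqK, hqU1⟩
  have hLconn : IsConnected L := isConnected_connectedComponentIn_iff.mpr ⟨hqK, hqU1⟩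
  have hLsub : L ⊆ K \ U1 := connectedComponentIn_subset _ _
  have hqL : q ∈ L := mem_connectedComponentIn ⟨hqK, hqU1⟩
  obtain ⟨s, hsL, hsS⟩ := hcut L hLc hLconn ⟨q, hqL, hqX0⟩ ⟨r, hrL, hclU1X1 hrU1⟩
  have hsC : s ∈ C := (hKsub (hLsub hsL).1).1
  rcases hCS ⟨hsC, hsS⟩ with h | h
  · exact (hKsub (hLsub hsL).1).2 h
  · exact (hLsub hsL).2 h
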